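/- Let n ≥ 2 and m = (m_1,…,m_n) ∈ ℝ^n with m_0 := 1. If (m_1,…,m_{n−1}) is I-realizable on ℕ₀, then L_Q(m) > 0 for every Q ∈ 𝒫_k and every k with 1 ≤ k ≤ n−1. -/
import Mathlib


open Polynomial

/-- `Lf P m = Σ_k p_k m_k`, the affine form associated to a polynomial `P`. -/
noncomputable def Lf (P : Polynomial ℝ) (m : ℕ → ℝ) : ℝ := P.sum fun k a => a * m k

/-- `𝒫_j`: monic real polynomials of degree `j` with `j` distinct roots in `ℕ₀`,
nonnegative on `ℕ₀`. -/
def PolyP (j : ℕ) (P : Polynomial ℝ) : Prop :=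
  P.Monic ∧ P.natDegree = j ∧
    (∃ S : Finset ℕ, S.card = j ∧ P = ∏ a ∈ S, (X - C (a : ℝ))) ∧
    ∀ x : ℕ, 0 ≤ P.eval (x : ℝ)

/-- `(m_1,…,m_j)` (with `m 0 = 1`) is realizable on `ℕ₀`: there is a probability
measure on the nonnegative integers whose `k`-th moment is `m k` for `k ≤ j`. -/
def RealizableN0 (j : ℕ) (m : ℕ → ℝ) : Prop :=
  ∃ μ : ℕ → ℝ, (∀ x, 0 ≤ μ x) ∧
    ∀ k, k ≤ j → HasSum (fun x : ℕ => (x : ℝ) ^ k * μ x) (m k)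

/-- I-realizability on `ℕ₀`. -/
def IRealizable (j : ℕ) (m : ℕ → ℝ) : Prop :=
  RealizableN0 j m ∧ ∀ P : Polynomial ℝ, PolyP j P ∨ PolyP (j - 1) P → 0 < Lf P m

/-- B-realizability on `ℕ₀`. -/
def BRealizable (j : ℕ) (m : ℕ → ℝ) : Prop :=
  RealizableN0 j m ∧ ∃ P : Polynomial ℝ, (PolyP j P ∨ PolyP (j - 1) P) ∧ Lf P m = 0

lemma hasSum_eval (j : ℕ) (m μ : ℕ → ℝ)
    (hμ : ∀ k, k ≤ j → HasSum (fun x : ℕ => (x : ℝ) ^ k * μ x) (m k))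
    (Q : Polynomial ℝ) (hQ : Q.natDegree ≤ j) :
    HasSum (fun x : ℕ => Q.eval (x : ℝ) * μ x) (Lf Q m) := by
  have hfun : ∀ x : ℕ, Q.eval (x : ℝ) * μ x
      = ∑ e ∈ Q.support, Q.coeff e * ((x : ℝ) ^ e * μ x) := by
    intro x
    rw [Polynomial.eval_eq_sum, Polynomial.sum, Finset.sum_mul]
    simp [mul_assoc]
  have hL : Lf Q m = ∑ e ∈ Q.support, Q.coeff e * m e := rfl
  rw [funext hfun, hL]
  exact hasSum_sum fun e he =>
    (hμ e (le_trans (Polynomial.le_natDegree_of_mem_supp e he) hQ)).mul_left _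

lemma prod_Ico_nonneg (N d : ℕ) (hd : Even d) (x : ℕ) :
    0 ≤ ∏ a ∈ Finset.Ico N (N + d), ((x : ℝ) - (a : ℝ)) := by
  by_cases hx : x ∈ Finset.Ico N (N + d)
  · rw [Finset.prod_eq_zero hx (by simp)]
  rcases lt_or_ge x N with h1 | h2
  · have hre : ∏ a ∈ Finset.Ico N (N + d), ((x : ℝ) - (a : ℝ))
        = (-1 : ℝ) ^ (Finset.Ico N (N + d)).card *
          ∏ a ∈ Finset.Ico N (N + d), ((a : ℝ) - (x : ℝ)) := by
      rw [← Finset.prod_const, ← Finset.prod_mul_distrib]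
      exact Finset.prod_congr rfl fun a _ => by ring
    rw [hre, Nat.card_Ico]
    have : (N + d - N) = d := by omega
    rw [this, hd.neg_one_pow, one_mul]
    refine Finset.prod_nonneg fun a ha => ?_
    have : x < a := lt_of_lt_of_le h1 (Finset.mem_Ico.mp ha).1
    have : (x : ℝ) < a := by exact_mod_cast this
    linarith
  · have h3 : N + d ≤ x := by
      simp only [Finset.mem_Ico, not_and, not_lt] at hx
      omega
    refine Finset.prod_nonneg fun a ha => ?_
    have : a ≤ x := le_trans (le_of_lt (Finset.mem_Ico.mp ha).2) h3
    have : (a : ℝ) ≤ x := by exact_mod_cast this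
    linarith

/-- If `(m_1,…,m_{n-1})` is I-realizable on `ℕ₀` then `L_Q(m) > 0` for all
`Q ∈ 𝒫_k`, `1 ≤ k ≤ n-1`. -/
theorem pos_of_Irealizable (n : ℕ) (hn : 2 ≤ n) (m : ℕ → ℝ) (hm0 : m 0 = 1)
    (hI : IRealizable (n - 1) m) :
    ∀ k, 1 ≤ k → k ≤ n - 1 → ∀ Q, PolyP k Q → 0 < Lf Q m := by
  intro k hk1 hk2 Q hQ
  obtain ⟨hQm, hQdeg, ⟨S, hScard, hSQ⟩, hQnn⟩ := hQ
  obtain ⟨⟨μ, hμ0, hμs⟩, hIpos⟩ := hI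
  obtain ⟨d, hdeven, htarget⟩ :
      ∃ d, Even d ∧ (k + d = n - 1 ∨ k + d = n - 1 - 1) := by
    by_cases h : Even (n - 1 - k)
    · exact ⟨n - 1 - k, h, Or.inl (by omega)⟩
    · refine ⟨n - 1 - 1 - k, ?_, Or.inr ?_⟩
      · rw [Nat.even_iff] at h ⊢; omega
      · rw [Nat.even_iff] at h; omega
  set N := S.sup id + 1 with hN
  set T := Finset.Ico N (N + d) with hT
  set S' := S ∪ T with hS'
  set P := ∏ a ∈ S', (X - C (a : ℝ)) with hP
  have hdisj : Disjoint S T := by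
    rw [Finset.disjoint_left]
    intro b hbS hbT
    have h1 : b ≤ S.sup id := Finset.le_sup (f := id) hbS
    have h2 := (Finset.mem_Ico.mp hbT).1
    omega
  have hcard : S'.card = k + d := by
    rw [hS', Finset.card_union_of_disjoint hdisj, hScard, Nat.card_Ico]
    omega
  have hPQ : P = Q * ∏ a ∈ T, (X - C (a : ℝ)) := by
    rw [hP, hS', Finset.prod_union hdisj, hSQ]
  have hPmonic : P.Monic := monic_prod_of_monic _ _ fun a _ => monic_X_sub_C _
  have hPdeg : P.natDegree = k + d := by
    rw [hP, Polynomial.natDegree_prod _ _ (fun a _ => X_sub_C_ne_zero _)]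
    simp only [natDegree_X_sub_C]
    rw [Finset.sum_const, smul_eq_mul, mul_one, hcard]
  have hPeval : ∀ x : ℕ, P.eval (x : ℝ)
      = Q.eval (x : ℝ) * ∏ a ∈ T, ((x : ℝ) - (a : ℝ)) := by
    intro x
    rw [hPQ]
    simp [Polynomial.eval_prod]
  have hPnn : ∀ x : ℕ, 0 ≤ P.eval (x : ℝ) := by
    intro x
    rw [hPeval]
    exact mul_nonneg (hQnn x) (prod_Ico_nonneg N d hdeven x)
  have hPmem : PolyP (n - 1) P ∨ PolyP (n - 1 - 1) P := by
    rcases htarget with h | h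
    · exact Or.inl ⟨hPmonic, by omega, ⟨S', by omega, rfl⟩, hPnn⟩
    · exact Or.inr ⟨hPmonic, by omega, ⟨S', by omega, rfl⟩, hPnn⟩
  have hpos : 0 < Lf P m := hIpos P hPmem
  have hsumP : HasSum (fun x : ℕ => P.eval (x : ℝ) * μ x) (Lf P m) :=
    hasSum_eval (n - 1) m μ hμs P (by omega)
  obtain ⟨x₀, hx₀⟩ : ∃ x₀ : ℕ, 0 < P.eval (x₀ : ℝ) * μ x₀ := by
    by_contra hcon
    push_neg at hcon
    have := hasSum_le hcon hsumP hasSum_zero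
    linarith
  have hμx : 0 < μ x₀ := by
    by_contra hμc
    push_neg at hμc
    nlinarith [hPnn x₀]
  have hPx : P.eval (x₀ : ℝ) ≠ 0 := by
    intro h
    rw [h, zero_mul] at hx₀
    exact lt_irrefl 0 hx₀
  have hQx : Q.eval (x₀ : ℝ) ≠ 0 := by
    intro h
    apply hPx
    rw [hPeval, h, zero_mul]
  have hQxpos : 0 < Q.eval (x₀ : ℝ) := (hQnn x₀).lt_of_ne (Ne.symm hQx)
  have hsumQ : HasSum (fun x : ℕ => Q.eval (x : ℝ) * μ x) (Lf Q m) :=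
    hasSum_eval (n - 1) m μ hμs Q (by omega)
  have hle : Q.eval (x₀ : ℝ) * μ x₀ ≤ Lf Q m :=
    le_hasSum hsumQ x₀ fun j _ => mul_nonneg (hQnn j) (hμ0 j)
  have : 0 < Q.eval (x₀ : ℝ) * μ x₀ := mul_pos hQxpos hμx
  linarith
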